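/- Let r ∈ ℂ, p = e^{ℓ} with ℓ > 0, v₀ ∈ ℂ*, and suppose φ is holomorphic on a neighbourhood of (0,∞) in ℂ and satisfies p^{1-r/2} φ(pt) = v₀ φ(t). Assume moreover that φ admits asymptotic power-series expansions: φ(t) ∼ ∑_{m ≥ k} c_m t^m as t → 0⁺ and t^{r-2} φ(-1/t) ∼ ∑_{m ≥ k} d_m t^m as t → 0⁺, for some k ∈ ℤ. If φ ≠ 0 then r ∈ ℤ and there is an integer κ with k ≤ κ ≤ r - 2 - k such that e^{κℓ} = v₀ e^{(r/2-1)ℓ}, and φ(t) is a constant multiple of t^κ. -/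

import Mathlib

open Complex Filter

private lemma coeff_zero (k : ℤ) (e : ℤ → ℂ)
    (h : ∀ N : ℤ, k ≤ N → ∃ C δ : ℝ, 0 < δ ∧ ∀ x : ℝ, 0 < x → x < δ →
      ‖∑ m ∈ Finset.Icc k (N - 1), e m * (x : ℂ) ^ m‖ ≤ C * x ^ N) :
    ∀ m : ℤ, k ≤ m → e m = 0 := by
  have key : ∀ n : ℕ, ∀ m : ℤ, k ≤ m → m - k = n → e m = 0 := by
    intro n
    induction n using Nat.strong_induction_on with
    | _ n ih =>
      intro m hm hmn
      obtain ⟨C, δ, hδ, hB⟩ := h (m + 1) (by omega)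
      have hsum : ∀ x : ℝ, 0 < x →
          ∑ j ∈ Finset.Icc k (m + 1 - 1), e j * (x : ℂ) ^ j = e m * (x : ℂ) ^ m := by
        intro x hx
        apply Finset.sum_eq_single_of_mem
        · simp only [Finset.mem_Icc]; omega
        · intro j hj hjm
          have : e j = 0 := by
            simp only [Finset.mem_Icc] at hj
            exact ih (j - k).toNat (by omega) j hj.1 (by omega)
          simp [this]
      by_contra hem
      have hem' : 0 < ‖e m‖ := norm_pos_iff.mpr hem
      set C' : ℝ := max C 1 with hC'
      have hC0 : 0 < C' := lt_of_lt_of_le one_pos (le_max_right _ _)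
      set x : ℝ := min (δ / 2) (‖e m‖ / (2 * C')) with hxdef
      have hx0 : 0 < x := lt_min (by linarith) (by positivity)
      have hxδ : x < δ := lt_of_le_of_lt (min_le_left _ _) (by linarith)
      have hb := hB x hx0 hxδ
      rw [hsum x hx0] at hb
      have hxm : (0:ℝ) < x ^ m := zpow_pos hx0 m
      have hnorm : ‖e m * (x : ℂ) ^ m‖ = ‖e m‖ * x ^ m := by
        rw [norm_mul, norm_zpow, Complex.norm_real, Real.norm_eq_abs, abs_of_pos hx0]
      rw [hnorm] at hb
      rw [zpow_add_one₀ hx0.ne' m] at hb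
      have h1 : ‖e m‖ ≤ C * x := by
        have := le_of_mul_le_mul_right (by nlinarith [hb] : ‖e m‖ * x ^ m ≤ (C * x) * x ^ m) hxm
        exact this
      have h2 : C * x ≤ C' * x := by
        have := le_max_left C 1
        nlinarith
      have h3 : C' * x ≤ C' * (‖e m‖ / (2 * C')) :=
        mul_le_mul_of_nonneg_left (min_le_right _ _) hC0.le
      have h4 : C' * (‖e m‖ / (2 * C')) = ‖e m‖ / 2 := by
        field_simp
      linarith
  intro m hm
  exact key (m - k).toNat m hm (by omega)

private lemma decay_zero (p : ℝ) (hp1 : 1 < p) (μ : ℂ) (k : ℤ) (f : ℝ → ℂ)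
    (hsc : ∀ x : ℝ, 0 < x → f (p * x) = μ * f x)
    (hdec : ∀ N : ℤ, k ≤ N → ∃ C δ : ℝ, 0 < δ ∧ ∀ x : ℝ, 0 < x → x < δ →
      ‖f x‖ ≤ C * x ^ N) :
    ∀ x : ℝ, 0 < x → f x = 0 := by
  intro x hx
  have hp0 : 0 < p := lt_trans one_pos hp1
  obtain ⟨n₀, hn₀⟩ := pow_unbounded_of_one_lt ‖μ‖ hp1
  set N : ℤ := max k n₀ with hN
  have hkN : k ≤ N := le_max_left _ _
  have hμN : ‖μ‖ < p ^ N := by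
    calc ‖μ‖ < p ^ n₀ := hn₀
    _ = p ^ (n₀ : ℤ) := (zpow_natCast p n₀).symm
    _ ≤ p ^ N := zpow_le_zpow_right₀ hp1.le (le_max_right _ _)
  have hpN : (0:ℝ) < p ^ N := zpow_pos hp0 N
  set ρ : ℝ := ‖μ‖ / p ^ N with hρ
  have hρ0 : 0 ≤ ρ := by positivity
  have hρ1 : ρ < 1 := (div_lt_one hpN).mpr hμN
  obtain ⟨C, δ, hδ, hB⟩ := hdec N hkN
  -- iteration
  have iter : ∀ n : ℕ, f x = μ ^ n * f (x / p ^ n) := by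
    intro n
    induction n with
    | zero => simp
    | succ n ih =>
      have harg : p * (x / p ^ (n + 1)) = x / p ^ n := by
        field_simp; ring
      have := hsc (x / p ^ (n + 1)) (by positivity)
      rw [harg] at this
      rw [ih, this, pow_succ]
      ring
  -- the bound sequence tends to 0
  have htend0 : Tendsto (fun n : ℕ => x / p ^ n) atTop (nhds 0) := by
    have : Tendsto (fun n : ℕ => x * (1 / p) ^ n) atTop (nhds (x * 0)) :=
      (tendsto_pow_atTop_nhds_zero_of_lt_one (by positivity)
        ((div_lt_one hp0).mpr hp1)).const_mul x
    simpa [div_eq_mul_inv, one_div] using this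
  have hev : ∀ᶠ n : ℕ in atTop, ‖f x‖ ≤ (C * x ^ N) * ρ ^ n := by
    filter_upwards [htend0.eventually_lt_const hδ] with n hn
    have hxn : 0 < x / p ^ n := by positivity
    have hb := hB _ hxn hn
    have hnorm : ‖f x‖ = ‖μ‖ ^ n * ‖f (x / p ^ n)‖ := by
      rw [iter n, norm_mul, norm_pow]
    have hexp : (x / p ^ n) ^ N = x ^ N / (p ^ N) ^ n := by
      rw [div_zpow]
      congr 1
      rw [← zpow_natCast p n, ← zpow_mul, mul_comm, zpow_mul, zpow_natCast]
    have : ‖f x‖ ≤ ‖μ‖ ^ n * (C * (x ^ N / (p ^ N) ^ n)) := by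
      rw [hnorm, ← hexp]
      exact mul_le_mul_of_nonneg_left hb (by positivity)
    calc ‖f x‖ ≤ ‖μ‖ ^ n * (C * (x ^ N / (p ^ N) ^ n)) := this
      _ = (C * x ^ N) * ρ ^ n := by
          rw [hρ, div_pow]
          field_simp
  have htb : Tendsto (fun n : ℕ => (C * x ^ N) * ρ ^ n) atTop (nhds 0) := by
    have := (tendsto_pow_atTop_nhds_zero_of_lt_one hρ0 hρ1).const_mul (C * x ^ N)
    simpa using this
  have : ‖f x‖ ≤ 0 := ge_of_tendsto htb hev
  simpa using norm_le_zero_iff.mp this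

private lemma coeff_relation (p : ℝ) (hp1 : 1 < p) (k : ℤ) (e : ℤ → ℂ) (μ : ℂ)
    (f : ℝ → ℂ) (hsc : ∀ x : ℝ, 0 < x → f (p * x) = μ * f x)
    (hexp : ∀ N : ℤ, k ≤ N → ∃ C δ : ℝ, 0 < δ ∧ ∀ x : ℝ, 0 < x → x < δ →
       ‖f x - ∑ m ∈ Finset.Icc k (N - 1), e m * (x : ℂ) ^ m‖ ≤ C * x ^ N) :
    ∀ m : ℤ, k ≤ m → ((p:ℂ) ^ m - μ) * e m = 0 := by
  have hp0 : 0 < p := lt_trans one_pos hp1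
  apply coeff_zero k
  intro N hN
  obtain ⟨C, δ, hδ, hB⟩ := hexp N hN
  have hC0 : 0 ≤ C := by
    have := hB (min (δ/2) 1 ) (by positivity) (lt_of_le_of_lt (min_le_left _ _) (by linarith))
    have hxx : (0:ℝ) < min (δ/2) 1 := by positivity
    nlinarith [norm_nonneg (f (min (δ/2) 1) - ∑ m ∈ Finset.Icc k (N - 1), e m * ((min (δ/2) 1 : ℝ) : ℂ) ^ m), zpow_pos hxx N]
  refine ⟨‖μ‖ * C + C * p ^ N, δ / p, by positivity, ?_⟩
  intro x hx hxδ
  have hx' : (0:ℝ) < p * x := by positivity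
  have hδp : δ / p < δ := div_lt_self hδ hp1
  have hpx : p * x < δ := by
    rw [lt_div_iff₀ hp0] at hxδ
    linarith [hxδ]
  have hcast : ∀ m : ℤ, ((p * x : ℝ) : ℂ) ^ m = (p:ℂ)^m * (x:ℂ)^m := by
    intro m; push_cast; rw [mul_zpow]
  have hkey : ∑ m ∈ Finset.Icc k (N - 1), ((p:ℂ) ^ m - μ) * e m * (x : ℂ) ^ m
      = μ * (f x - ∑ m ∈ Finset.Icc k (N - 1), e m * (x : ℂ) ^ m)
        - (f (p * x) - ∑ m ∈ Finset.Icc k (N - 1), e m * ((p * x : ℝ) : ℂ) ^ m) := by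
    rw [hsc x hx]
    have : ∀ S1 S2 : ℂ, μ * (f x - S1) - (μ * f x - S2) = S2 - μ * S1 := by
      intro S1 S2; ring
    rw [this, Finset.mul_sum, ← Finset.sum_sub_distrib]
    exact Finset.sum_congr rfl fun m _ => by rw [hcast m]; ring
  rw [hkey]
  have h1 := hB x hx (hxδ.trans hδp)
  have h2 := hB (p * x) hx' hpx
  calc ‖_ - _‖ ≤ ‖μ * (f x - ∑ m ∈ Finset.Icc k (N - 1), e m * (x : ℂ) ^ m)‖
        + ‖f (p * x) - ∑ m ∈ Finset.Icc k (N - 1), e m * ((p * x : ℝ) : ℂ) ^ m‖ :=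
      norm_sub_le _ _
    _ ≤ ‖μ‖ * (C * x ^ N) + C * (p * x) ^ N := by
      rw [norm_mul]
      have := mul_le_mul_of_nonneg_left h1 (norm_nonneg μ)
      linarith [h2]
    _ = (‖μ‖ * C + C * p ^ N) * x ^ N := by
      rw [mul_zpow]; ring

private lemma exact_zero (p : ℝ) (hp1 : 1 < p) (k : ℤ) (e : ℤ → ℂ) (μ : ℂ)
    (f : ℝ → ℂ) (hsc : ∀ x : ℝ, 0 < x → f (p * x) = μ * f x)
    (hexp : ∀ N : ℤ, k ≤ N → ∃ C δ : ℝ, 0 < δ ∧ ∀ x : ℝ, 0 < x → x < δ →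
       ‖f x - ∑ m ∈ Finset.Icc k (N - 1), e m * (x : ℂ) ^ m‖ ≤ C * x ^ N)
    (hz : ∀ m : ℤ, k ≤ m → e m = 0) :
    ∀ x : ℝ, 0 < x → f x = 0 := by
  apply decay_zero p hp1 μ k f hsc
  intro N hN
  obtain ⟨C, δ, hδ, hB⟩ := hexp N hN
  refine ⟨C, δ, hδ, ?_⟩
  intro x hx hxδ
  have := hB x hx hxδ
  have hs : ∑ m ∈ Finset.Icc k (N - 1), e m * (x : ℂ) ^ m = 0 := by
    apply Finset.sum_eq_zero
    intro m hm
    simp only [Finset.mem_Icc] at hm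
    rw [hz m hm.1, zero_mul]
  rwa [hs, sub_zero] at this

private lemma exact_monomial (p : ℝ) (hp1 : 1 < p) (k : ℤ) (e : ℤ → ℂ) (μ : ℂ)
    (f : ℝ → ℂ) (hsc : ∀ x : ℝ, 0 < x → f (p * x) = μ * f x)
    (hexp : ∀ N : ℤ, k ≤ N → ∃ C δ : ℝ, 0 < δ ∧ ∀ x : ℝ, 0 < x → x < δ →
       ‖f x - ∑ m ∈ Finset.Icc k (N - 1), e m * (x : ℂ) ^ m‖ ≤ C * x ^ N)
    (κ : ℤ) (hκ : k ≤ κ) (hμκ : μ = (p:ℂ) ^ κ)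
    (hz : ∀ m : ℤ, k ≤ m → m ≠ κ → e m = 0) :
    ∀ x : ℝ, 0 < x → f x = e κ * (x : ℂ) ^ κ := by
  have hp0 : 0 < p := lt_trans one_pos hp1
  set g : ℝ → ℂ := fun x => f x - e κ * (x : ℂ) ^ κ with hg
  have hgs : ∀ x : ℝ, 0 < x → g (p * x) = μ * g x := by
    intro x hx
    simp only [hg]
    rw [hsc x hx]
    have hcast : ((p * x : ℝ) : ℂ) ^ κ = (p:ℂ) ^ κ * (x:ℂ) ^ κ := by
      push_cast; rw [mul_zpow]
    rw [hcast, hμκ]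
    ring
  have hgd : ∀ N : ℤ, k ≤ N → ∃ C δ : ℝ, 0 < δ ∧ ∀ x : ℝ, 0 < x → x < δ →
      ‖g x‖ ≤ C * x ^ N := by
    intro N hN
    set N' : ℤ := max N (κ + 1) with hN'
    obtain ⟨C, δ, hδ, hB⟩ := hexp N' (le_trans hN (le_max_left _ _))
    refine ⟨max C 0, min δ 1, by positivity, ?_⟩
    intro x hx hxδ
    have hxδ' : x < δ := lt_of_lt_of_le hxδ (min_le_left _ _)
    have hx1 : x ≤ 1 := le_of_lt (lt_of_lt_of_le hxδ (min_le_right _ _))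
    have hsum : ∑ m ∈ Finset.Icc k (N' - 1), e m * (x : ℂ) ^ m = e κ * (x : ℂ) ^ κ := by
      apply Finset.sum_eq_single_of_mem
      · simp only [Finset.mem_Icc]; omega
      · intro m hm hmκ
        simp only [Finset.mem_Icc] at hm
        rw [hz m hm.1 hmκ, zero_mul]
    have hb := hB x hx hxδ'
    rw [hsum] at hb
    calc ‖g x‖ ≤ C * x ^ N' := hb
      _ ≤ max C 0 * x ^ N' :=
        mul_le_mul_of_nonneg_right (le_max_left _ _) (zpow_pos hx N').le
      _ ≤ max C 0 * x ^ N := by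
        apply mul_le_mul_of_nonneg_left _ (le_max_right _ _)
        exact zpow_le_zpow_right_of_le_one₀ hx hx1 (le_max_left _ _)
  have := decay_zero p hp1 μ k g hgs hgd
  intro x hx
  have h0 := this x hx
  simp only [hg] at h0
  exact sub_eq_zero.mp h0

private lemma extend_monomial (U : Set ℂ) (hU : IsOpen U) (hconn : IsConnected U)
    (hUreal : ∀ x : ℝ, x ≠ 0 → (x : ℂ) ∈ U)
    (φ : ℂ → ℂ) (hφ : DifferentiableOn ℂ φ U) (a : ℂ) (κ : ℤ)
    (h : ∀ x : ℝ, 0 < x → φ (x : ℂ) = a * (x : ℂ) ^ κ) :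
    ∀ x : ℝ, x ≠ 0 → φ (x : ℂ) = a * (x : ℂ) ^ κ := by
  set n : ℕ := κ.natAbs with hn
  have hκn : ((κ + n : ℤ)) = ((κ + n).toNat : ℤ) := by
    rw [Int.toNat_of_nonneg]; omega
  set s : ℕ := (κ + n).toNat with hs
  set F : ℂ → ℂ := fun z => φ z * z ^ n with hF
  set G : ℂ → ℂ := fun z => a * z ^ s with hG
  have hzpow : ∀ z : ℂ, z ≠ 0 → a * z ^ κ * z ^ n = a * z ^ s := by
    intro z hz
    have : (z : ℂ) ^ κ * z ^ n = z ^ s := by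
      rw [← zpow_natCast z n, ← zpow_add₀ hz, ← zpow_natCast z s, ← hκn]
    rw [mul_assoc, this]
  have hFG : ∀ x : ℝ, 0 < x → F (x : ℂ) = G (x : ℂ) := by
    intro x hx
    simp only [hF, hG]
    rw [h x hx]
    exact hzpow x (by exact_mod_cast hx.ne')
  have hFa : AnalyticOnNhd ℂ F U :=
    (hφ.analyticOnNhd hU).mul ((analyticOnNhd_id).pow n)
  have hGa : AnalyticOnNhd ℂ G U :=
    (analyticOnNhd_const).mul ((analyticOnNhd_id).pow s)
  have h1U : (1 : ℂ) ∈ U := hUreal 1 one_ne_zero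
  have hfreq : ∃ᶠ z in nhdsWithin (1 : ℂ) {(1 : ℂ)}ᶜ, F z = G z := by
    have htend : Tendsto (fun j : ℕ => ((1 + 1 / (j + 1) : ℝ) : ℂ)) atTop
        (nhdsWithin (1 : ℂ) {(1 : ℂ)}ᶜ) := by
      apply tendsto_nhdsWithin_of_tendsto_nhds_of_eventually_within
      · have : Tendsto (fun j : ℕ => (1 + 1 / (j + 1) : ℝ)) atTop (nhds 1) := by
          have := (tendsto_one_div_add_atTop_nhds_zero_nat : Tendsto (fun n : ℕ => 1 / ((n : ℝ) + 1)) atTop (nhds 0))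
          simpa using (tendsto_const_nhds (x := (1:ℝ))).add this
        have h2 := (Complex.continuous_ofReal.tendsto 1).comp this
        simpa [Function.comp_def] using h2
      · apply Filter.Eventually.of_forall
        intro j
        simp only [Set.mem_compl_iff, Set.mem_singleton_iff]
        intro hcon
        have : (1 + 1 / (j + 1 : ℝ)) = 1 := by exact_mod_cast hcon
        have hj : (0:ℝ) < 1 / (j + 1) := by positivity
        linarith
    apply htend.frequently
    apply Filter.Frequently.of_forall
    intro j
    exact hFG _ (by positivity)
  have heq : Set.EqOn F G U :=
    hFa.eqOn_of_preconnected_of_frequently_eq hGa hconn.isPreconnected h1U hfreq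
  intro x hx
  have hxC : (x : ℂ) ≠ 0 := by exact_mod_cast hx
  have := heq (hUreal x hx)
  simp only [hF, hG] at this
  have h2 : φ (x : ℂ) * (x : ℂ) ^ n = a * (x : ℂ) ^ κ * (x : ℂ) ^ n := by
    rw [this, hzpow _ hxC]
  exact mul_right_cancel₀ (pow_ne_zero n hxC) h2

/-- invariants of a hyperbolic scaling.  Suppose `φ` is holomorphic on a
connected neighbourhood `U` of `(0,∞)` (and `(-∞,0)`, needed for `φ(-1/t)` to make
sense) in ℂ, satisfies `p^(1-r/2) φ (p t) = v₀ φ t` with `p = e^ℓ`, `ℓ > 0`, and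
admits asymptotic power series expansions `φ t ∼ ∑_{m ≥ k} c_m t^m` and
`t^(r-2) φ(-1/t) ∼ ∑_{m ≥ k} d_m t^m` as `t → 0⁺`.  If `φ ≠ 0` then `r ∈ ℤ` and
there is an integer `κ` with `k ≤ κ ≤ r - 2 - k` such that
`e^(κℓ) = v₀ e^((r/2-1)ℓ)` and `φ` is a constant multiple of `t^κ`. -/
theorem hyperbolic_invariant_classification
    (r : ℂ) (ℓ : ℝ) (hℓ : 0 < ℓ) (p : ℝ) (hp : p = Real.exp ℓ)
    (v₀ : ℂ) (hv₀ : v₀ ≠ 0) (k : ℤ) (c d : ℤ → ℂ)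
    (U : Set ℂ) (hU : IsOpen U) (hconn : IsConnected U)
    (hUreal : ∀ x : ℝ, x ≠ 0 → (x : ℂ) ∈ U)
    (φ : ℂ → ℂ) (hφ : DifferentiableOn ℂ φ U)
    (hscale : ∀ x : ℝ, x ≠ 0 →
        ((p : ℂ)) ^ ((1 : ℂ) - r / 2) * φ ((p * x : ℝ) : ℂ) = v₀ * φ (x : ℂ))
    (hexp0 : ∀ N : ℤ, k ≤ N → ∃ C δ : ℝ, 0 < δ ∧ ∀ x : ℝ, 0 < x → x < δ →
        ‖φ (x : ℂ) - ∑ m ∈ Finset.Icc k (N - 1), c m * (x : ℂ) ^ m‖ ≤ C * x ^ N)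
    (hexpinf : ∀ N : ℤ, k ≤ N → ∃ C δ : ℝ, 0 < δ ∧ ∀ x : ℝ, 0 < x → x < δ →
        ‖(x : ℂ) ^ (r - 2) * φ ((-1 / x : ℝ) : ℂ) -
            ∑ m ∈ Finset.Icc k (N - 1), d m * (x : ℂ) ^ m‖ ≤ C * x ^ N)
    (hne : ¬ ∀ x : ℝ, x ≠ 0 → φ (x : ℂ) = 0) :
    ∃ m : ℤ, r = (m : ℂ) ∧ ∃ κ : ℤ, k ≤ κ ∧ κ ≤ m - 2 - k ∧
      Complex.exp ((κ : ℂ) * (ℓ : ℂ)) = v₀ * Complex.exp ((r / 2 - 1) * (ℓ : ℂ)) ∧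
      ∃ a : ℂ, ∀ x : ℝ, x ≠ 0 → φ (x : ℂ) = a * (x : ℂ) ^ κ := by
  have hp0 : 0 < p := hp ▸ Real.exp_pos ℓ
  have hp1 : 1 < p := by rw [hp]; exact Real.one_lt_exp_iff.mpr hℓ
  have hpC : (p : ℂ) ≠ 0 := by exact_mod_cast hp0.ne'
  set σ : ℂ := (p : ℂ) ^ ((1 : ℂ) - r / 2) with hσdef
  have hσ : σ ≠ 0 := by
    rw [hσdef, Complex.cpow_def_of_ne_zero hpC]
    exact Complex.exp_ne_zero _
  set μ₁ : ℂ := σ⁻¹ * v₀ with hμ₁def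
  have hμ₁ : μ₁ ≠ 0 := mul_ne_zero (inv_ne_zero hσ) hv₀
  set f₁ : ℝ → ℂ := fun x => φ (x : ℂ) with hf₁
  have hsc₁ : ∀ x : ℝ, 0 < x → f₁ (p * x) = μ₁ * f₁ x := by
    intro x hx
    have h := hscale x hx.ne'
    simp only [hf₁, hμ₁def]
    rw [mul_assoc, ← h, inv_mul_cancel_left₀ hσ]
  have hrel_c : ∀ m : ℤ, k ≤ m → ((p:ℂ) ^ m - μ₁) * c m = 0 :=
    coeff_relation p hp1 k c μ₁ f₁ hsc₁ hexp0
  -- there must be a nonzero coefficient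
  by_cases hcall : ∀ m : ℤ, k ≤ m → c m = 0
  · -- degenerate case: φ vanishes, contradiction
    exfalso
    apply hne
    have hz := exact_zero p hp1 k c μ₁ f₁ hsc₁ hexp0 hcall
    have h0 : ∀ x : ℝ, 0 < x → φ (x : ℂ) = 0 * (x : ℂ) ^ (0:ℤ) := by
      intro x hx; rw [zero_mul]; exact hz x hx
    have := extend_monomial U hU hconn hUreal φ hφ 0 0 h0
    intro x hx
    rw [this x hx, zero_mul]
  · push_neg at hcall
    obtain ⟨κ, hκk, hcκ⟩ := hcall
    have hμκ : μ₁ = (p:ℂ) ^ κ := by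
      have := hrel_c κ hκk
      rcases mul_eq_zero.mp this with h | h
      · rw [sub_eq_zero] at h; exact h.symm
      · exact absurd h hcκ
    have hzc : ∀ m : ℤ, k ≤ m → m ≠ κ → c m = 0 := by
      intro m hm hmκ
      rcases mul_eq_zero.mp (hrel_c m hm) with h | h
      · exfalso
        rw [sub_eq_zero, hμκ] at h
        have hR : (p:ℝ) ^ m = (p:ℝ) ^ κ := by
          have := h
          rw [← Complex.ofReal_zpow, ← Complex.ofReal_zpow] at this
          exact_mod_cast this
        exact hmκ (zpow_right_injective₀ hp0 hp1.ne' hR)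
      · exact h
    have hmono : ∀ x : ℝ, 0 < x → φ (x : ℂ) = c κ * (x : ℂ) ^ κ :=
      exact_monomial p hp1 k c μ₁ f₁ hsc₁ hexp0 κ hκk hμκ hzc
    have hall' : ∀ x : ℝ, x ≠ 0 → φ (x : ℂ) = c κ * (x : ℂ) ^ κ :=
      extend_monomial U hU hconn hUreal φ hφ (c κ) κ hmono
    -- the function at infinity
    set G : ℝ → ℂ := fun x => (x : ℂ) ^ (r - 2) * φ (((-1 / x : ℝ) : ℂ)) with hG
    set μ₂ : ℂ := v₀⁻¹ * ((p:ℂ) ^ (r - 2) * σ) with hμ₂def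
    have hμ₂ : μ₂ ≠ 0 := by
      apply mul_ne_zero (inv_ne_zero hv₀)
      apply mul_ne_zero _ hσ
      rw [Complex.cpow_def_of_ne_zero hpC]
      exact Complex.exp_ne_zero _
    have hsc₂ : ∀ x : ℝ, 0 < x → G (p * x) = μ₂ * G x := by
      intro x hx
      have hx0 : (-1 / (p * x) : ℝ) ≠ 0 := by
        apply div_ne_zero (by norm_num) (by positivity)
      have h := hscale (-1 / (p * x)) hx0
      have harg : (p * (-1 / (p * x)) : ℝ) = -1 / x := by
        field_simp
      rw [harg] at h
      -- h : σ * φ (-1/x) = v₀ * φ (-1/(p x))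
      have hφpx : φ (((-1 / (p * x) : ℝ) : ℂ)) = v₀⁻¹ * σ * φ (((-1 / x : ℝ) : ℂ)) := by
        rw [mul_assoc, h, inv_mul_cancel_left₀ hv₀]
      simp only [hG]
      have hcpow : ((p * x : ℝ) : ℂ) ^ (r - 2) = (p:ℂ) ^ (r - 2) * (x:ℂ) ^ (r - 2) := by
        rw [Complex.ofReal_mul]
        exact mul_cpow_ofReal_nonneg hp0.le hx.le _
      rw [hcpow, hφpx, hμ₂def]
      ring
    have hrel_d : ∀ m : ℤ, k ≤ m → ((p:ℂ) ^ m - μ₂) * d m = 0 :=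
      coeff_relation p hp1 k d μ₂ G hsc₂ hexpinf
    -- d must have a nonzero coefficient
    by_cases hdall : ∀ m : ℤ, k ≤ m → d m = 0
    · exfalso
      have hz := exact_zero p hp1 k d μ₂ G hsc₂ hexpinf hdall 1 one_pos
      simp only [hG] at hz
      have hval := hall' (-1/1) (by norm_num)
      rw [hval] at hz
      rcases mul_eq_zero.mp hz with h | h
      · rw [Complex.ofReal_one, Complex.one_cpow] at h
        exact one_ne_zero h
      · rcases mul_eq_zero.mp h with h' | h'
        · exact hcκ h'
        · exact zpow_ne_zero κ (by norm_num : (((-1/1 : ℝ)) : ℂ) ≠ 0) h'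
    · push_neg at hdall
      obtain ⟨lam, hlamk, hdlam⟩ := hdall
      have hμlam : μ₂ = (p:ℂ) ^ lam := by
        rcases mul_eq_zero.mp (hrel_d lam hlamk) with h | h
        · rw [sub_eq_zero] at h; exact h.symm
        · exact absurd h hdlam
      have hzd : ∀ m : ℤ, k ≤ m → m ≠ lam → d m = 0 := by
        intro m hm hmlam
        rcases mul_eq_zero.mp (hrel_d m hm) with h | h
        · exfalso
          rw [sub_eq_zero, hμlam] at h
          have hR : (p:ℝ) ^ m = (p:ℝ) ^ lam := by
            rw [← Complex.ofReal_zpow, ← Complex.ofReal_zpow] at h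
            exact_mod_cast h
          exact hmlam (zpow_right_injective₀ hp0 hp1.ne' hR)
        · exact h
      have hGexact : ∀ x : ℝ, 0 < x → G x = d lam * (x : ℂ) ^ lam :=
        exact_monomial p hp1 k d μ₂ G hsc₂ hexpinf lam hlamk hμlam hzd
      -- key functional equation along exp
      set A : ℂ := c κ * (-1 : ℂ) ^ κ with hA
      have hA0 : A ≠ 0 := mul_ne_zero hcκ (zpow_ne_zero κ (by norm_num))
      set u : ℂ := r - 2 - κ - lam with hu
      have hEy : ∀ y : ℝ, A * Complex.exp (u * y) = d lam := by
        intro y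
        set x : ℝ := Real.exp y with hxdef
        have hx : 0 < x := Real.exp_pos y
        have hGx := hGexact x hx
        have hneg : (-1 / x : ℝ) ≠ 0 := div_ne_zero (by norm_num) hx.ne'
        have hφx := hall' (-1 / x) hneg
        simp only [hG] at hGx
        rw [hφx] at hGx
        -- rewrite all powers of x as exponentials
        have hxC : (x : ℂ) = Complex.exp (y : ℂ) := by
          rw [hxdef, Complex.ofReal_exp]
        have him : (-Real.pi < (y:ℂ).im ∧ (y:ℂ).im ≤ Real.pi) := by
          simp [Real.pi_pos, Real.pi_nonneg]
        have hlog : Complex.log ((x : ℂ)) = (y : ℂ) := by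
          rw [hxC, Complex.log_exp him.1 him.2]
        have hcp : (x : ℂ) ^ (r - 2) = Complex.exp ((r - 2) * y) := by
          rw [Complex.cpow_def_of_ne_zero (by rw [hxC]; exact Complex.exp_ne_zero _), hlog]
          congr 1
          ring
        have hzp : ∀ n : ℤ, (x : ℂ) ^ n = Complex.exp ((n : ℂ) * y) := by
          intro n
          rw [Complex.exp_int_mul, hxC]
        have hcast : ((-1 / x : ℝ) : ℂ) = -1 * ((x : ℂ))⁻¹ := by push_cast; ring
        rw [hcast, mul_zpow, inv_zpow, ← zpow_neg] at hGx
        rw [hcp, hzp (-κ), hzp lam] at hGx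
        -- hGx : exp((r-2)y) * (c κ * ((-1)^κ * exp((-κ)*y))) = d lam * exp(lam*y)
        have hexpne : Complex.exp ((lam : ℂ) * y) ≠ 0 := Complex.exp_ne_zero _
        have h2 : c κ * (-1:ℂ)^κ * (Complex.exp ((r - 2) * (y:ℂ)) *
            Complex.exp ((((-κ : ℤ)) : ℂ) * y)) = d lam * Complex.exp ((lam : ℂ) * y) := by
          linear_combination hGx
        have h3 : Complex.exp (u * y) * Complex.exp ((lam : ℂ) * y)
            = Complex.exp ((r - 2) * (y:ℂ)) * Complex.exp ((((-κ : ℤ)) : ℂ) * y) := by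
          rw [← Complex.exp_add, ← Complex.exp_add]
          congr 1
          rw [hu]
          push_cast
          ring
        apply mul_right_cancel₀ hexpne
        calc A * Complex.exp (u * y) * Complex.exp ((lam : ℂ) * y)
            = A * (Complex.exp (u * y) * Complex.exp ((lam : ℂ) * y)) := by ring
          _ = A * (Complex.exp ((r - 2) * (y:ℂ)) * Complex.exp ((((-κ : ℤ)) : ℂ) * y)) := by
              rw [h3]
          _ = d lam * Complex.exp ((lam : ℂ) * y) := by rw [hA]; linear_combination h2
      have hAd : A = d lam := by
        have := hEy 0
        simpa using this
      have hexp1 : ∀ y : ℝ, Complex.exp (u * y) = 1 := by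
        intro y
        have h1 := hEy y
        rw [hAd] at h1
        have := mul_left_cancel₀ (hAd ▸ hA0) (h1.trans (mul_one (d lam)).symm)
        exact this
      have hu0 : u = 0 := by
        obtain ⟨n, hn⟩ := Complex.exp_eq_one_iff.mp (by simpa using hexp1 1)
        obtain ⟨j, hj⟩ := Complex.exp_eq_one_iff.mp (hexp1 Real.pi)
        rw [hn] at hj
        -- hj : n * (2πI) * π = j * (2πI)
        have h2πI : (2 * (Real.pi : ℂ) * Complex.I) ≠ 0 := by
          simp [Real.pi_ne_zero, Complex.I_ne_zero]
        have hnj : (n : ℂ) * Real.pi = j := by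
          have : ((n : ℂ) * Real.pi - j) * (2 * Real.pi * Complex.I) = 0 := by
            rw [sub_mul, ← hj]; ring
          have h4 := (mul_eq_zero.mp this).resolve_right h2πI
          exact sub_eq_zero.mp h4
        have hnjR : (n : ℝ) * Real.pi = j := by exact_mod_cast hnj
        have hn0 : n = 0 := by
          by_contra hn0
          apply irrational_pi
          refine ⟨(j : ℚ) / (n : ℚ), ?_⟩
          have hnR : (n : ℝ) ≠ 0 := Int.cast_ne_zero.mpr hn0
          push_cast
          rw [div_eq_iff hnR]
          linear_combination -hnjR
        rw [hn, hn0]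
        simp
      -- r = 2 + κ + lam
      refine ⟨2 + κ + lam, ?_, κ, hκk, by omega, ?_, c κ, hall'⟩
      · have hr : r = 2 + (κ:ℂ) + (lam:ℂ) := by
          have h5 := hu0
          rw [hu] at h5
          linear_combination h5
        rw [hr]; push_cast; ring
      · -- exponential identity
        have hv : v₀ = σ * (p:ℂ) ^ κ := by
          have : σ * μ₁ = v₀ := by
            rw [hμ₁def]; field_simp
          rw [← this, hμκ]
        have hpexp : (p : ℂ) = Complex.exp (ℓ : ℂ) := by
          rw [hp, Complex.ofReal_exp]
        have hσexp : σ = Complex.exp (((1:ℂ) - r/2) * ℓ) := by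
          rw [hσdef, hpexp, Complex.cpow_def_of_ne_zero (Complex.exp_ne_zero _),
            Complex.log_exp (by simpa using Real.pi_pos) (by simpa using Real.pi_nonneg)]
          ring_nf
        have hpκ : (p : ℂ) ^ κ = Complex.exp ((κ : ℂ) * ℓ) := by
          rw [Complex.exp_int_mul, hpexp]
        rw [hv, hσexp, hpκ, ← Complex.exp_add, ← Complex.exp_add]
        congr 1
        ring
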